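/- arXiv:2504.17033 — 3 statements merged into one kernel-verified Lean document; each statement's English description precedes it below -/
import Mathlib

section
/- Pull Minimum lemma, first part: let d̂ be an estimate function, let B, 𝓑 ∈ ℝ≥0∞ with 𝓑 < B, and let S be a set of vertices such that for every vertex v with d̂(v) ≠ d(v) and d(v) < B there exists a complete vertex u ∈ S such that the shortest path to v visits u. Let X := {x ∈ S : d̂(x) < 𝓑}. Then for every vertex v with d̂(v) ≠ d(v) and d(v) < 𝓑, there exists a complete vertex u ∈ X such that the shortest path to v visits u. -/
open scoped ENNReal

namespace SSSP

variable {V : Type*}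

/-- The weight of a walk (a list of vertices): the sum of `w` over consecutive pairs.
A one-vertex walk has weight 0. -/
noncomputable def walkWeight (w : V → V → ℝ≥0∞) : List V → ℝ≥0∞
  | [] => 0
  | [_] => 0
  | a :: b :: p => w a b + walkWeight w (b :: p)

/-- `p` is a walk from `u` to `v`: a nonempty list beginning at `u` and ending at `v`. -/
def IsWalk (u v : V) (p : List V) : Prop :=
  p ≠ [] ∧ p.head? = some u ∧ p.getLast? = some v

/-- The distance from `u` to `v`: the infimum of the weights of all walks from `u` to `v`. -/
noncomputable def dist (w : V → V → ℝ≥0∞) (u v : V) : ℝ≥0∞ :=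
  ⨅ p : {p : List V // IsWalk u v p}, walkWeight w p.1

/-- The shortest path (from `s`) to `v` visits `u`. -/
def Visits (w : V → V → ℝ≥0∞) (s u v : V) : Prop :=
  dist w s u + dist w u v = dist w s v

/-- The uniqueness assumption: any two distinct walks starting from `s` with finite
weight have different weights. -/
def UniqueWeights (w : V → V → ℝ≥0∞) (s : V) : Prop :=
  ∀ p q : List V, p ≠ [] → q ≠ [] → p.head? = some s → q.head? = some s →
    walkWeight w p ≠ ⊤ → walkWeight w q ≠ ⊤ → walkWeight w p = walkWeight w q → p = q

/-- The relaxation operator. -/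
noncomputable def relax (w : V → V → ℝ≥0∞) (f : V → ℝ≥0∞) : V → ℝ≥0∞ :=
  fun v => min (f v) (⨅ u, f u + w u v)

end SSSP

namespace SSSP

/-- Pull Minimum lemma, first part. -/
theorem pull_minimum_first {V : Type*} [Fintype V] (w : V → V → ℝ≥0∞) (s : V)
    (dhat : V → ℝ≥0∞) (hest : ∀ v, dist w s v ≤ dhat v)
    (B 𝓑 : ℝ≥0∞) (hBB : 𝓑 < B) (S : Set V)
    (hS : ∀ v, dhat v ≠ dist w s v → dist w s v < B →
      ∃ u ∈ S, dhat u = dist w s u ∧ Visits w s u v) :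
    ∀ v, dhat v ≠ dist w s v → dist w s v < 𝓑 →
      ∃ u ∈ {x ∈ S | dhat x < 𝓑}, dhat u = dist w s u ∧ Visits w s u v := by
  intro v hv hvB
  obtain ⟨u, huS, hcomp, hvis⟩ := hS v hv (hvB.trans hBB)
  refine ⟨u, ⟨huS, ?_⟩, hcomp, hvis⟩
  calc dhat u = dist w s u := hcomp
    _ ≤ dist w s u + dist w u v := le_self_add
    _ = dist w s v := hvis
    _ < 𝓑 := hvB

end SSSP
end

section
/- Pull Minimum lemma, second part: let d̂ be an estimate function, let B, 𝓑 ∈ ℝ≥0∞ with 𝓑 < B, and let S be a set of vertices such that for every vertex v with d̂(v) ≠ d(v) and d(v) < B there exists a complete vertex u ∈ S such that the shortest path to v visits u. Let X := {x ∈ S : d̂(x) < 𝓑}. Then for every 𝓑' < 𝓑, the set {v : d(v) < 𝓑' and there exists u ∈ S such that the shortest path to v visits u} equals the set {v : d(v) < 𝓑' and there exists u ∈ X such that the shortest path to v visits u}. -/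
open scoped ENNReal

namespace SSSP

lemma walkWeight_append {V : Type*} (w : V → V → ℝ≥0∞) :
    ∀ (p : List V) (b : V) (t : List V), p.getLast? = some b →
      walkWeight w (p ++ t) = walkWeight w p + walkWeight w (b :: t)
  | [], b, t, h => by simp at h
  | [a], b, t, h => by
      simp only [List.getLast?_singleton, Option.some.injEq] at h
      subst h
      simp [walkWeight]
  | a :: a' :: p, b, t, h => by
      have hlast : (a' :: p).getLast? = some b := by
        rw [List.getLast?_cons_cons] at h; exact h
      have ih := walkWeight_append w (a' :: p) b t hlast
      simp only [List.cons_append, walkWeight, List.append_eq] at *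
      rw [ih, add_assoc]

lemma dist_triangle {V : Type*} (w : V → V → ℝ≥0∞) (a b c : V) :
    dist w a c ≤ dist w a b + dist w b c := by
  simp only [dist]
  rw [ENNReal.iInf_add]
  refine le_iInf fun p => ?_
  rw [ENNReal.add_iInf]
  refine le_iInf fun q => ?_
  obtain ⟨hp, hpa, hpb⟩ := p.2
  obtain ⟨hq, hqb, hqc⟩ := q.2
  obtain ⟨t, ht⟩ : ∃ t, q.1 = b :: t := by
    cases hq' : q.1 with
    | nil => exact absurd hq' hq
    | cons x t =>
        rw [hq'] at hqb
        simp at hqb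
        subst hqb; exact ⟨t, rfl⟩
  have hwalk : IsWalk a c (p.1 ++ t) := by
    refine ⟨by simp [hp], ?_, ?_⟩
    · rwa [List.head?_append_of_ne_nil _ hp]
    · rcases ht' : t with _ | ⟨x, t'⟩
      · rw [ht, ht'] at hqc
        simp only [List.getLast?_singleton, Option.some.injEq] at hqc
        simpa [hqc] using hpb
      · rw [List.getLast?_append_of_ne_nil _ (by simp [ht'])]
        rw [ht, ht'] at hqc
        rw [List.getLast?_cons_cons] at hqc
        exact hqc
  calc dist w a c ≤ walkWeight w (p.1 ++ t) := iInf_le (fun r : {p : List V // IsWalk a c p} => walkWeight w r.1) ⟨p.1 ++ t, hwalk⟩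
    _ = walkWeight w p.1 + walkWeight w (b :: t) := walkWeight_append w p.1 b t hpb
    _ = walkWeight w p.1 + walkWeight w q.1 := by rw [ht]

/-- Pull Minimum lemma, second part. -/
theorem pull_minimum_second {V : Type*} [Fintype V] (w : V → V → ℝ≥0∞) (s : V)
    (dhat : V → ℝ≥0∞) (hest : ∀ v, dist w s v ≤ dhat v)
    (B 𝓑 : ℝ≥0∞) (hBB : 𝓑 < B) (S : Set V)
    (hS : ∀ v, dhat v ≠ dist w s v → dist w s v < B →
      ∃ u ∈ S, dhat u = dist w s u ∧ Visits w s u v) :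
    ∀ 𝓑' < 𝓑,
      {v | dist w s v < 𝓑' ∧ ∃ u ∈ S, Visits w s u v} =
        {v | dist w s v < 𝓑' ∧ ∃ u ∈ {x ∈ S | dhat x < 𝓑}, Visits w s u v} := by
  intro 𝓑' h𝓑'
  ext v
  simp only [Set.mem_setOf_eq, Set.mem_sep_iff]
  constructor
  · rintro ⟨hv, u, huS, huv⟩
    refine ⟨hv, ?_⟩
    have hdu : dist w s u ≤ dist w s v := huv ▸ le_self_add
    have hdu𝓑 : dist w s u < 𝓑 := lt_of_le_of_lt hdu (hv.trans h𝓑')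
    by_cases hcomp : dhat u = dist w s u
    · exact ⟨u, ⟨huS, hcomp ▸ hdu𝓑⟩, huv⟩
    · obtain ⟨u', hu'S, hu'comp, hu'vis⟩ := hS u hcomp (hdu𝓑.trans hBB)
      have hdu' : dist w s u' ≤ dist w s u := hu'vis ▸ le_self_add
      refine ⟨u', ⟨hu'S, hu'comp ▸ hdu'.trans_lt hdu𝓑⟩, ?_⟩
      unfold Visits at *
      refine le_antisymm ?_ (dist_triangle w s u' v)
      calc dist w s u' + dist w u' v
          ≤ dist w s u' + (dist w u' u + dist w u v) :=
            add_le_add le_rfl (dist_triangle w u' u v)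
        _ = (dist w s u' + dist w u' u) + dist w u v := by rw [add_assoc]
        _ = dist w s u + dist w u v := by rw [hu'vis]
        _ = dist w s v := huv
  · rintro ⟨hv, u, ⟨huS, _⟩, huv⟩
    exact ⟨hv, u, huS, huv⟩

end SSSP
end

section
/- Under the uniqueness assumption, shortest walks are simple: if p is a walk from s to a vertex v whose weight equals d(v), and d(v) < ⊤, then p contains no repeated vertices. -/
open scoped ENNReal

namespace SSSP

lemma walkWeight_split {V : Type*} (w : V → V → ℝ≥0∞) (x : List V) (u : V) (y : List V) :
    walkWeight w (x ++ u :: y) = walkWeight w (x ++ [u]) + walkWeight w (u :: y) := by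
  induction x with
  | nil => simp [walkWeight]
  | cons a x ih =>
    cases x with
    | nil =>
      cases y with
      | nil => simp [walkWeight]
      | cons c y => simp [walkWeight, add_assoc]
    | cons b x' =>
      simp only [List.cons_append, walkWeight, List.append_eq]
      simp only [List.cons_append] at ih
      rw [ih, add_assoc]

lemma exists_dup_decomp {V : Type*} {l : List V} (h : ¬ l.Nodup) :
    ∃ (u : V) (a b c : List V), l = a ++ u :: b ++ u :: c := by
  induction l with
  | nil => exact absurd List.nodup_nil h
  | cons x t ih =>
    by_cases hx : x ∈ t
    · obtain ⟨b, c, rfl⟩ := List.append_of_mem hx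
      exact ⟨x, [], b, c, rfl⟩
    · have ht : ¬ t.Nodup := fun hn => h (List.nodup_cons.2 ⟨hx, hn⟩)
      obtain ⟨u, a, b, c, rfl⟩ := ih ht
      exact ⟨u, x :: a, b, c, rfl⟩

/-- Under the uniqueness assumption, shortest walks are simple. -/
theorem shortest_walk_nodup {V : Type*} [Fintype V] (w : V → V → ℝ≥0∞) (s : V)
    (huniq : UniqueWeights w s) (v : V) (p : List V)
    (hp : IsWalk s v p) (hw : walkWeight w p = dist w s v)
    (hfin : dist w s v < ⊤) :
    p.Nodup := by
  by_contra hnd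
  obtain ⟨u, a, b, c, rfl⟩ := exists_dup_decomp hnd
  obtain ⟨-, hhead, hlast⟩ := hp
  have hqne : a ++ u :: c ≠ [] := by simp
  have hqhead : (a ++ u :: c).head? = some s := by
    cases a with
    | nil => simpa using hhead
    | cons x a' => simpa using hhead
  have hqlast : (a ++ u :: c).getLast? = some v := by
    have h1 : (a ++ u :: b ++ u :: c).getLast? = (u :: c).getLast? := by
      rw [show a ++ u :: b ++ u :: c = (a ++ u :: b) ++ u :: c by simp]
      exact List.getLast?_append_of_ne_nil _ (by simp)
    have h2 : (a ++ u :: c).getLast? = (u :: c).getLast? :=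
      List.getLast?_append_of_ne_nil _ (by simp)
    rw [h2, ← h1, hlast]
  have hqwalk : IsWalk s v (a ++ u :: c) := ⟨hqne, hqhead, hqlast⟩
  have hsplit1 : walkWeight w (a ++ u :: b ++ u :: c)
      = walkWeight w (a ++ [u]) + (walkWeight w ((u :: b) ++ [u]) + walkWeight w (u :: c)) := by
    rw [show a ++ u :: b ++ u :: c = a ++ u :: (b ++ u :: c) by simp,
      walkWeight_split, ← List.cons_append, walkWeight_split w (u :: b) u c]
  have hsplit2 : walkWeight w (a ++ u :: c)
      = walkWeight w (a ++ [u]) + walkWeight w (u :: c) := walkWeight_split w a u c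
  have hle : walkWeight w (a ++ u :: c) ≤ walkWeight w (a ++ u :: b ++ u :: c) := by
    rw [hsplit1, hsplit2]
    exact add_le_add le_rfl le_add_self
  have hge : dist w s v ≤ walkWeight w (a ++ u :: c) :=
    iInf_le _ (⟨a ++ u :: c, hqwalk⟩ : {p : List V // IsWalk s v p})
  have heq : walkWeight w (a ++ u :: c) = walkWeight w (a ++ u :: b ++ u :: c) :=
    le_antisymm hle (hw ▸ hge)
  have hfin' : walkWeight w (a ++ u :: b ++ u :: c) ≠ ⊤ := by
    rw [hw]; exact hfin.ne
  have hqfin : walkWeight w (a ++ u :: c) ≠ ⊤ := heq ▸ hfin'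
  have := huniq (a ++ u :: c) (a ++ u :: b ++ u :: c) hqne (by simp) hqhead hhead hqfin hfin' heq
  have hlen := congrArg List.length this
  simp at hlen
  omega
end SSSP
end
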